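/- arXiv:0712.0958 — 2 statements merged into one kernel-verified Lean document; each statement's English description precedes it below -/
import Mathlib

section
/- For the edge-reinforced random walk on a cycle of length l, for each vertex i the process κ_n^i = Y_n^+(i) - Y_n^-(i) is a martingale with respect to the natural filtration, where Y_n^±(i) = ∑_{k=0}^{n-1} 1{I_k = i, I_{k+1} = i±1} / W(X_k^{e^±}), with e^+ = {i,i+1} and e^- = {i,i-1}. -/
open MeasureTheory Filter

/-- for the edge-reinforced random walk `(I n)` on the cycle `ℤ/lℤ`
(with edge `e i = {i, i+1}`, edge counts `X n i`, and transition probabilities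
proportional to `W` of the current edge counts), for each vertex `i` the process
`κ n = Y⁺ n i - Y⁻ n i` is a martingale, where
`Y⁺ n i = ∑_{k<n} 1{I k = i, I (k+1) = i+1} / W (X k (e i))` and
`Y⁻ n i = ∑_{k<n} 1{I k = i, I (k+1) = i-1} / W (X k (e (i-1)))`. -/
theorem reinforced_walk_cycle_kappa_martingale
    {Ω : Type*} {m0 : MeasurableSpace Ω} (μ : Measure Ω) [IsProbabilityMeasure μ]
    (ℱ : Filtration ℕ m0) (l : ℕ) (hl : 3 ≤ l) [NeZero l]
    (W : ℕ → ℝ) (hW : ∀ k, 0 < W k)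
    (I : ℕ → Ω → ZMod l) (X : ℕ → ZMod l → Ω → ℕ) (x0 : ZMod l → ℕ)
    (hIadapted : ∀ n, Measurable[ℱ n] (I n))
    (hX0 : ∀ i ω, X 0 i ω = x0 i)
    (hXrec : ∀ n i ω, X (n + 1) i ω = X n i ω +
      (if (I n ω = i ∧ I (n + 1) ω = i + 1) ∨ (I n ω = i + 1 ∧ I (n + 1) ω = i)
        then 1 else 0))
    (hstep : ∀ n ω, I (n + 1) ω = I n ω + 1 ∨ I (n + 1) ω = I n ω - 1)
    (htrans : ∀ n (i : ZMod l), ∀ᵐ ω ∂μ, I n ω = i →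
      (μ[Set.indicator {ω' | I (n + 1) ω' = i + 1} (fun _ => (1 : ℝ)) | ℱ n]) ω
        = W (X n i ω) / (W (X n i ω) + W (X n (i - 1) ω))) :
    ∀ i : ZMod l, Martingale (fun n ω =>
      (∑ k ∈ Finset.range n,
        if I k ω = i ∧ I (k + 1) ω = i + 1 then 1 / W (X k i ω) else 0)
      - ∑ k ∈ Finset.range n,
        if I k ω = i ∧ I (k + 1) ω = i - 1 then 1 / W (X k (i - 1) ω) else 0)
      ℱ μ := by
  classical
  intro i
  -- i + 1 ≠ i - 1 on ZMod l for l ≥ 3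
  have hne : (i + 1 : ZMod l) ≠ i - 1 := by
    intro h
    have h2 : ((2 : ℕ) : ZMod l) = 0 := by push_cast; linear_combination h
    have hdvd := (ZMod.natCast_eq_zero_iff 2 l).mp h2
    have := Nat.le_of_dvd (by norm_num) hdvd
    omega
  -- measurability of level sets of I
  have hsetI : ∀ (k m : ℕ) (j : ZMod l), k ≤ m → MeasurableSet[ℱ m] {ω | I k ω = j} :=
    fun k m j hkm => ((hIadapted k).mono (ℱ.mono hkm) le_rfl) (measurableSet_singleton j)
  -- measurability of X
  have hXmeas : ∀ n j, Measurable[ℱ n] (X n j) := by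
    intro n
    induction n with
    | zero =>
        intro j
        have h : X 0 j = fun _ => x0 j := funext fun ω => hX0 j ω
        rw [h]; exact measurable_const
    | succ n ih =>
        intro j
        have hEq : X (n + 1) j = fun ω => X n j ω +
            (if (I n ω = j ∧ I (n + 1) ω = j + 1) ∨ (I n ω = j + 1 ∧ I (n + 1) ω = j)
              then 1 else 0) := funext fun ω => hXrec n j ω
        rw [hEq]
        refine ((ih j).mono (ℱ.mono n.le_succ) le_rfl).add
          (Measurable.ite ?_ measurable_const measurable_const)
        have hs : {ω | (I n ω = j ∧ I (n + 1) ω = j + 1) ∨ (I n ω = j + 1 ∧ I (n + 1) ω = j)}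
            = ({ω | I n ω = j} ∩ {ω | I (n + 1) ω = j + 1})
              ∪ ({ω | I n ω = j + 1} ∩ {ω | I (n + 1) ω = j}) := by
          ext ω; simp [Set.mem_setOf_eq, Set.mem_inter_iff, Set.mem_union]
        rw [hs]
        exact ((hsetI n (n + 1) j n.le_succ).inter (hsetI (n + 1) (n + 1) (j + 1) le_rfl)).union
          ((hsetI n (n + 1) (j + 1) n.le_succ).inter (hsetI (n + 1) (n + 1) j le_rfl))
  -- X is bounded
  have hXle : ∀ n j ω, X n j ω ≤ x0 j + n := by
    intro n j ω
    induction n with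
    | zero => rw [hX0]; omega
    | succ n ih => rw [hXrec]; split_ifs <;> omega
  -- inverse weight bound
  have hC : ∀ (n : ℕ) (j : ZMod l), ∃ C : ℝ, 0 ≤ C ∧ ∀ ω, 1 / W (X n j ω) ≤ C := by
    intro n j
    refine ⟨(Finset.range (x0 j + n + 1)).sup' ⟨0, by simp⟩ (fun m => 1 / W m), ?_, ?_⟩
    · have h0 : (0 : ℕ) ∈ Finset.range (x0 j + n + 1) := Finset.mem_range.mpr (by omega)
      have hle0 := Finset.le_sup' (fun m => 1 / W m) h0
      have hge : (0 : ℝ) ≤ 1 / W 0 := div_nonneg zero_le_one (hW 0).le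
      linarith
    · intro ω
      exact Finset.le_sup' (fun m => 1 / W m)
        (Finset.mem_range.mpr (by have := hXle n j ω; omega))
  -- generic integrability of bounded measurable functions
  have hint : ∀ (g : Ω → ℝ) (C : ℝ), Measurable g → (∀ ω, |g ω| ≤ C) → Integrable g μ :=
    fun g C hg hb => ⟨hg.aestronglyMeasurable,
      HasFiniteIntegral.of_bounded (C := C) (ae_of_all _ fun ω => by
        simpa [Real.norm_eq_abs] using hb ω)⟩
  -- the increments
  set A : ℕ → Ω → ℝ := fun k ω =>
    if I k ω = i ∧ I (k + 1) ω = i + 1 then 1 / W (X k i ω) else 0 with hAdef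
  set B : ℕ → Ω → ℝ := fun k ω =>
    if I k ω = i ∧ I (k + 1) ω = i - 1 then 1 / W (X k (i - 1) ω) else 0 with hBdef
  have hWnat : Measurable W := measurable_from_top
  have hAmeas : ∀ k, Measurable[ℱ (k + 1)] (A k) := by
    intro k
    refine Measurable.ite ?_ ?_ measurable_const
    · have hs : {ω | I k ω = i ∧ I (k + 1) ω = i + 1}
          = {ω | I k ω = i} ∩ {ω | I (k + 1) ω = i + 1} := rfl
      rw [hs]
      exact (hsetI k (k + 1) i k.le_succ).inter (hsetI (k + 1) (k + 1) (i + 1) le_rfl)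
    · exact (measurable_const.div (hWnat.comp ((hXmeas k i).mono (ℱ.mono k.le_succ) le_rfl)))
  have hBmeas : ∀ k, Measurable[ℱ (k + 1)] (B k) := by
    intro k
    refine Measurable.ite ?_ ?_ measurable_const
    · have hs : {ω | I k ω = i ∧ I (k + 1) ω = i - 1}
          = {ω | I k ω = i} ∩ {ω | I (k + 1) ω = i - 1} := rfl
      rw [hs]
      exact (hsetI k (k + 1) i k.le_succ).inter (hsetI (k + 1) (k + 1) (i - 1) le_rfl)
    · exact (measurable_const.div (hWnat.comp ((hXmeas k (i - 1)).mono (ℱ.mono k.le_succ) le_rfl)))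
  have hAint : ∀ k, Integrable (A k) μ := by
    intro k
    obtain ⟨C, hC0, hCb⟩ := hC k i
    refine hint _ C ((hAmeas k).mono (ℱ.le _) le_rfl) fun ω => ?_
    by_cases h : I k ω = i ∧ I (k + 1) ω = i + 1
    · simp only [hAdef, if_pos h]
      rw [abs_of_nonneg (div_nonneg zero_le_one (hW _).le)]; exact hCb ω
    · simp [hAdef, if_neg h, hC0]
  have hBint : ∀ k, Integrable (B k) μ := by
    intro k
    obtain ⟨C, hC0, hCb⟩ := hC k (i - 1)
    refine hint _ C ((hBmeas k).mono (ℱ.le _) le_rfl) fun ω => ?_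
    by_cases h : I k ω = i ∧ I (k + 1) ω = i - 1
    · simp only [hBdef, if_pos h]
      rw [abs_of_nonneg (div_nonneg zero_le_one (hW _).le)]; exact hCb ω
    · simp [hBdef, if_neg h, hC0]
  show Martingale (fun n ω => (∑ k ∈ Finset.range n, A k ω) - ∑ k ∈ Finset.range n, B k ω) ℱ μ
  refine martingale_of_condExp_sub_eq_zero_nat ?_ ?_ ?_
  · -- adapted
    intro n
    refine Measurable.stronglyMeasurable ?_
    refine Measurable.sub ?_ ?_ <;>
      refine Finset.measurable_sum _ fun k hk => ?_
    · exact (hAmeas k).mono (ℱ.mono (Finset.mem_range.mp hk)) le_rfl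
    · exact (hBmeas k).mono (ℱ.mono (Finset.mem_range.mp hk)) le_rfl
  · -- integrable
    intro n
    exact (integrable_finset_sum _ fun k _ => hAint k).sub
      (integrable_finset_sum _ fun k _ => hBint k)
  · -- condexp of increment is zero
    intro n
    have hfd : ((fun ω => (∑ k ∈ Finset.range (n + 1), A k ω) - ∑ k ∈ Finset.range (n + 1), B k ω)
        - fun ω => (∑ k ∈ Finset.range n, A k ω) - ∑ k ∈ Finset.range n, B k ω)
        = A n - B n := by
      funext ω
      simp only [Pi.sub_apply, Finset.sum_range_succ]
      ring
    rw [hfd]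
    -- setup
    set g : Ω → ℝ := Set.indicator {ω' | I (n + 1) ω' = i + 1} (fun _ => (1 : ℝ)) with hgdef
    set c : Ω → ℝ := fun ω => if I n ω = i then 1 / W (X n i ω) else 0 with hcdef
    set d : Ω → ℝ := fun ω => if I n ω = i then 1 / W (X n (i - 1) ω) else 0 with hddef
    have hc_sm : StronglyMeasurable[ℱ n] c :=
      (Measurable.ite (hsetI n n i le_rfl)
        (measurable_const.div (hWnat.comp (hXmeas n i))) measurable_const).stronglyMeasurable
    have hd_sm : StronglyMeasurable[ℱ n] d :=
      (Measurable.ite (hsetI n n i le_rfl)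
        (measurable_const.div (hWnat.comp (hXmeas n (i - 1)))) measurable_const).stronglyMeasurable
    have hg_meas : Measurable g :=
      measurable_const.indicator ((ℱ.le (n + 1)) _ (hsetI (n + 1) (n + 1) (i + 1) le_rfl))
    have hg_int : Integrable g μ := by
      refine hint g 1 hg_meas fun ω => ?_
      by_cases h : I (n + 1) ω = i + 1 <;> simp [hgdef, Set.indicator_apply, h]
    have hcg : A n = c * g := by
      funext ω
      by_cases h1 : I n ω = i <;> by_cases h2 : I (n + 1) ω = i + 1 <;>
        simp [hAdef, hcdef, hgdef, Set.indicator_apply, h1, h2]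
    have hne' : (i - 1 : ZMod l) ≠ i + 1 := fun h => hne h.symm
    have hBdg : B n = d - d * g := by
      funext ω
      by_cases h1 : I n ω = i
      · rcases hstep n ω with h2 | h2 <;> rw [h1] at h2
        · have h3 : I (n + 1) ω ≠ i - 1 := by rw [h2]; exact hne
          simp [hBdef, hddef, hgdef, Set.indicator_apply, h1, h2, h3, hne]
        · have h3 : I (n + 1) ω ≠ i + 1 := by rw [h2]; exact fun h => hne h.symm
          simp [hBdef, hddef, hgdef, Set.indicator_apply, h1, h2, h3, hne']
      · simp [hBdef, hddef, h1]
    obtain ⟨C, hC0, hCb⟩ := hC n (i - 1)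
    have hd_abs : ∀ ω, |d ω| ≤ C := by
      intro ω
      by_cases h1 : I n ω = i
      · simp only [hddef, if_pos h1]
        rw [abs_of_nonneg (div_nonneg zero_le_one (hW _).le)]; exact hCb ω
      · simp [hddef, h1, hC0]
    have hg_abs : ∀ ω, |g ω| ≤ 1 := by
      intro ω
      by_cases h : I (n + 1) ω = i + 1 <;>
        simp [hgdef, Set.indicator_apply, h]
    have hdg_int : Integrable (d * g) μ := by
      refine hint _ C (((hd_sm.measurable.mono (ℱ.le n) le_rfl)).mul hg_meas) fun ω => ?_
      rw [Pi.mul_apply, abs_mul]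
      calc |d ω| * |g ω| ≤ C * 1 :=
            mul_le_mul (hd_abs ω) (hg_abs ω) (abs_nonneg _) hC0
        _ = C := mul_one C
    have hd_int : Integrable d μ :=
      hint _ C (hd_sm.measurable.mono (ℱ.le n) le_rfl) hd_abs
    have hA_int : Integrable (c * g) μ := hcg ▸ hAint n
    have h1 : μ[A n|ℱ n] =ᵐ[μ] c * μ[g|ℱ n] := by
      rw [hcg]; exact condExp_mul_of_stronglyMeasurable_left hc_sm hA_int hg_int
    have h2 : μ[B n|ℱ n] =ᵐ[μ] d - d * μ[g|ℱ n] := by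
      rw [hBdg]
      refine (condExp_sub hd_int hdg_int _).trans ?_
      have hd_ce : μ[d|ℱ n] = d := condExp_of_stronglyMeasurable (ℱ.le n) hd_sm hd_int
      rw [hd_ce]
      exact EventuallyEq.sub (EventuallyEq.refl _ _)
        (condExp_mul_of_stronglyMeasurable_left hd_sm hdg_int hg_int)
    refine (condExp_sub (hAint n) (hBint n) _).trans ?_
    refine (h1.sub h2).trans ?_
    filter_upwards [htrans n i] with ω hω
    simp only [Pi.sub_apply, Pi.mul_apply, Pi.zero_apply]
    by_cases hIn : I n ω = i
    · have hp := hω hIn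
      rw [← hgdef] at hp
      simp only [hcdef, hddef, if_pos hIn]
      rw [hp]
      have w1 := (hW (X n i ω)).ne'
      have w2 := (hW (X n (i - 1) ω)).ne'
      have hs : W (X n i ω) + W (X n (i - 1) ω) ≠ 0 := by
        have := hW (X n i ω); have := hW (X n (i - 1) ω); positivity
      field_simp
      ring
    · simp [hcdef, hddef, hIn]
end

section
/- For the edge-reinforced random walk on the square (cycle of length 4), the process κ_n = ∑_{i=0}^{3} (-1)^i W*(X_n^{e_i}) is a martingale, where W*(n) = ∑_{k=0}^{n-1} 1/W(k). -/
open MeasureTheory Filter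

private lemma zmod4_cases (z : ZMod 4) : z = 0 ∨ z = 1 ∨ z = 2 ∨ z = 3 := by
  revert z; decide

private lemma zmod4_sign (z : ZMod 4) : (-1:ℝ)^((z-1).val) = -(-1)^(z.val) := by
  rcases (show ∀ a : ZMod 4, a = 0 ∨ a = 1 ∨ a = 2 ∨ a = 3 by decide) z with h|h|h|h <;>
    subst h <;>
    norm_num [show ((0:ZMod 4)-1).val = 3 from rfl, show ((1:ZMod 4)-1).val = 0 from rfl,
      show ((2:ZMod 4)-1).val = 1 from rfl, show ((3:ZMod 4)-1).val = 2 from rfl,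
      show (0:ZMod 4).val = 0 from rfl, show (1:ZMod 4).val = 1 from rfl,
      show (2:ZMod 4).val = 2 from rfl, show (3:ZMod 4).val = 3 from rfl]

private lemma integrable_of_bdd {Ω : Type*} {m0 : MeasurableSpace Ω} {μ : Measure Ω}
    [IsProbabilityMeasure μ] {f : Ω → ℝ} (hf : Measurable f) {C : ℝ}
    (hC : ∀ ω, |f ω| ≤ C) : Integrable f μ :=
  (integrable_const C).mono' hf.aestronglyMeasurable
    (Filter.Eventually.of_forall fun ω => by simpa [Real.norm_eq_abs] using hC ω)

private lemma stepLemma {Ω : Type*} {m0 : MeasurableSpace Ω} (μ : Measure Ω)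
    [IsProbabilityMeasure μ] (ℱ : Filtration ℕ m0)
    (W : ℕ → ℝ) (hW : ∀ k, 0 < W k)
    (I : ℕ → Ω → ZMod 4) (X : ℕ → ZMod 4 → Ω → ℕ) (n : ℕ)
    (hIm : Measurable[ℱ n] (I n)) (hIm1 : Measurable (I (n + 1)))
    (hXm : ∀ i, Measurable[ℱ n] (X n i))
    (B : ℕ) (hXb : ∀ i ω, X n i ω < B) (z : ZMod 4)
    (htr : ∀ᵐ ω ∂μ, I n ω = z →
      (μ[Set.indicator {ω' | I (n + 1) ω' = z + 1} (fun _ => (1 : ℝ)) | ℱ n]) ω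
        = W (X n z ω) / (W (X n z ω) + W (X n (z - 1) ω))) :
    Integrable (fun ω => (if I n ω = z then (1:ℝ) else 0) *
        (((-1:ℝ) ^ z.val / W (X n z ω) - (-1:ℝ) ^ (z-1).val / W (X n (z-1) ω)) *
          (if I (n+1) ω = z + 1 then (1:ℝ) else 0)
         + (-1:ℝ) ^ (z-1).val / W (X n (z-1) ω))) μ ∧
    μ[(fun ω => (if I n ω = z then (1:ℝ) else 0) *
        (((-1:ℝ) ^ z.val / W (X n z ω) - (-1:ℝ) ^ (z-1).val / W (X n (z-1) ω)) *
          (if I (n+1) ω = z + 1 then (1:ℝ) else 0)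
         + (-1:ℝ) ^ (z-1).val / W (X n (z-1) ω))) | ℱ n] =ᵐ[μ] 0 := by
  classical
  set C0 : ℝ := ∑ k ∈ Finset.range B, 1 / W k with hC0_def
  have hC0 : ∀ m, m < B → 1 / W m ≤ C0 := fun m hm =>
    Finset.single_le_sum (f := fun k => 1 / W k)
      (fun i _ => le_of_lt (one_div_pos.2 (hW i))) (Finset.mem_range.2 hm)
  set f : Ω → ℝ := fun ω => (if I n ω = z then (1:ℝ) else 0) *
      ((-1:ℝ) ^ z.val / W (X n z ω) - (-1:ℝ) ^ (z-1).val / W (X n (z-1) ω)) with hf_def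
  set g : Ω → ℝ := fun ω => (if I n ω = z then (1:ℝ) else 0) *
      ((-1:ℝ) ^ (z-1).val / W (X n (z-1) ω)) with hg_def
  set Y : Ω → ℝ := fun ω => (if I (n+1) ω = z + 1 then (1:ℝ) else 0) with hY_def
  have habs : ∀ (m : ℕ) (s : ℝ), |s| = 1 → m < B → |s / W m| ≤ C0 := by
    intro m s hs hm
    rw [abs_div, hs, abs_of_pos (hW m)]
    exact hC0 m hm
  have hsa : |(-1:ℝ) ^ z.val| = 1 := by rw [abs_pow, abs_neg, abs_one, one_pow]
  have hsb : |(-1:ℝ) ^ (z-1).val| = 1 := by rw [abs_pow, abs_neg, abs_one, one_pow]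
  have hchi : ∀ ω, |(if I n ω = z then (1:ℝ) else 0)| ≤ 1 := by
    intro ω; split <;> norm_num
  -- measurability
  have hWX : ∀ i : ZMod 4, Measurable[ℱ n] fun ω => W (X n i ω) := fun i =>
    (measurable_from_top (f := W)).comp (hXm i)
  have hchim : Measurable[ℱ n] fun ω => (if I n ω = z then (1:ℝ) else 0) :=
    Measurable.ite (hIm (measurableSet_singleton z)) measurable_const measurable_const
  have hfm : Measurable[ℱ n] f := by
    rw [hf_def]
    exact hchim.mul ((measurable_const.div (hWX z)).sub (measurable_const.div (hWX (z-1))))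
  have hgm : Measurable[ℱ n] g := by
    rw [hg_def]
    exact hchim.mul (measurable_const.div (hWX (z-1)))
  have hYm : Measurable Y := by
    rw [hY_def]
    exact Measurable.ite (hIm1 (measurableSet_singleton (z+1))) measurable_const
      measurable_const
  -- bounds
  have hf_bd : ∀ ω, |f ω| ≤ 1 * (C0 + C0) := by
    intro ω
    rw [hf_def]
    refine (abs_mul _ _).le.trans (mul_le_mul (hchi ω) ((abs_sub _ _).trans
      (add_le_add (habs _ _ hsa (hXb z ω)) (habs _ _ hsb (hXb (z-1) ω)))) (abs_nonneg _)
      zero_le_one)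
  have hg_bd : ∀ ω, |g ω| ≤ 1 * C0 := by
    intro ω
    rw [hg_def]
    exact (abs_mul _ _).le.trans (mul_le_mul (hchi ω) (habs _ _ hsb (hXb (z-1) ω))
      (abs_nonneg _) zero_le_one)
  have hC0nn : (0:ℝ) ≤ C0 := Finset.sum_nonneg fun i _ => (one_div_pos.2 (hW i)).le
  have hY_bd : ∀ ω, |Y ω| ≤ 1 := by intro ω; simp only [hY_def]; split <;> norm_num
  have hf_int : Integrable f μ := integrable_of_bdd (hfm.mono (ℱ.le n) le_rfl) hf_bd
  have hg_int : Integrable g μ := integrable_of_bdd (hgm.mono (ℱ.le n) le_rfl) hg_bd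
  have hY_int : Integrable Y μ := integrable_of_bdd hYm hY_bd
  have hfY_int : Integrable (f * Y) μ := by
    refine integrable_of_bdd ((hfm.mono (ℱ.le n) le_rfl).mul hYm) (C := 1 * (C0 + C0) * 1) ?_
    intro ω
    rw [Pi.mul_apply, abs_mul]
    exact mul_le_mul (hf_bd ω) (hY_bd ω) (abs_nonneg _) (by linarith)
  have hkey : (fun ω => (if I n ω = z then (1:ℝ) else 0) *
        (((-1:ℝ) ^ z.val / W (X n z ω) - (-1:ℝ) ^ (z-1).val / W (X n (z-1) ω)) *
          (if I (n+1) ω = z + 1 then (1:ℝ) else 0)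
         + (-1:ℝ) ^ (z-1).val / W (X n (z-1) ω))) = f * Y + g := by
    funext ω
    simp only [hf_def, hg_def, hY_def, Pi.add_apply, Pi.mul_apply]
    ring
  have hYind : Y = Set.indicator {ω' | I (n + 1) ω' = z + 1} (fun _ => (1:ℝ)) := by
    funext ω
    rw [hY_def]
    simp [Set.indicator_apply, Set.mem_setOf_eq]
  constructor
  · rw [hkey]; exact hfY_int.add hg_int
  · rw [hkey]
    have h1 : μ[f * Y + g | ℱ n] =ᵐ[μ] μ[f * Y | ℱ n] + μ[g | ℱ n] := condExp_add hfY_int hg_int _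
    have h2 : μ[f * Y | ℱ n] =ᵐ[μ] f * μ[Y | ℱ n] :=
      condExp_mul_of_stronglyMeasurable_left hfm.stronglyMeasurable hfY_int hY_int
    have h3 : μ[g | ℱ n] = g := condExp_of_stronglyMeasurable (ℱ.le n)
      hgm.stronglyMeasurable hg_int
    refine h1.trans ?_
    rw [h3]
    filter_upwards [h2, htr] with ω hω2 hωtr
    simp only [Pi.add_apply, Pi.zero_apply]
    rw [hω2, Pi.mul_apply]
    by_cases hI : I n ω = z
    · have hp : (μ[Y | ℱ n]) ω = W (X n z ω) / (W (X n z ω) + W (X n (z - 1) ω)) := by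
        rw [hYind]; exact hωtr hI
      rw [hp, hf_def, hg_def]
      simp only [hI, if_pos]
      rw [zmod4_sign z]
      have h1' : W (X n z ω) ≠ 0 := (hW _).ne'
      have h2' : W (X n (z-1) ω) ≠ 0 := (hW _).ne'
      have h3' : W (X n z ω) + W (X n (z-1) ω) ≠ 0 := (add_pos (hW _) (hW _)).ne'
      field_simp
      ring
    · rw [hf_def, hg_def]
      simp [hI]
/-- for the edge-reinforced random walk on the square (cycle `ℤ/4ℤ`),
the process `κ n = ∑_{i=0}^{3} (-1)^i W* (X n (e i))` is a martingale, where
`W* m = ∑_{k<m} 1 / W k`. -/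
theorem reinforced_walk_square_alternating_martingale
    {Ω : Type*} {m0 : MeasurableSpace Ω} (μ : Measure Ω) [IsProbabilityMeasure μ]
    (ℱ : Filtration ℕ m0)
    (W : ℕ → ℝ) (hW : ∀ k, 0 < W k)
    (I : ℕ → Ω → ZMod 4) (X : ℕ → ZMod 4 → Ω → ℕ) (x0 : ZMod 4 → ℕ)
    (hIadapted : ∀ n, Measurable[ℱ n] (I n))
    (hX0 : ∀ i ω, X 0 i ω = x0 i)
    (hXrec : ∀ n (i : ZMod 4) ω, X (n + 1) i ω = X n i ω +
      (if (I n ω = i ∧ I (n + 1) ω = i + 1) ∨ (I n ω = i + 1 ∧ I (n + 1) ω = i)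
        then 1 else 0))
    (hstep : ∀ n ω, I (n + 1) ω = I n ω + 1 ∨ I (n + 1) ω = I n ω - 1)
    (htrans : ∀ n (i : ZMod 4), ∀ᵐ ω ∂μ, I n ω = i →
      (μ[Set.indicator {ω' | I (n + 1) ω' = i + 1} (fun _ => (1 : ℝ)) | ℱ n]) ω
        = W (X n i ω) / (W (X n i ω) + W (X n (i - 1) ω))) :
    Martingale (fun n ω => ∑ i ∈ Finset.range 4,
      (-1 : ℝ) ^ i * ∑ k ∈ Finset.range (X n (i : ZMod 4) ω), 1 / W k) ℱ μ := by
  classical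
  -- measurability of the edge counts
  have hXm : ∀ n (i : ZMod 4), Measurable[ℱ n] (X n i) := by
    intro n
    induction n with
    | zero =>
      intro i
      have : X 0 i = fun _ => x0 i := funext (hX0 i)
      rw [this]; exact measurable_const
    | succ n ih =>
      intro i
      have hrw : X (n + 1) i = fun ω => X n i ω +
          (if (I n ω = i ∧ I (n + 1) ω = i + 1) ∨ (I n ω = i + 1 ∧ I (n + 1) ω = i)
            then 1 else 0) := funext (hXrec n i)
      rw [hrw]
      have hIn : Measurable[ℱ (n+1)] (I n) := (hIadapted n).mono (ℱ.mono n.le_succ) le_rfl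
      have hs : MeasurableSet[ℱ (n+1)] {ω | (I n ω = i ∧ I (n + 1) ω = i + 1) ∨
          (I n ω = i + 1 ∧ I (n + 1) ω = i)} := by
        exact ((hIn (measurableSet_singleton i)).inter
            ((hIadapted (n+1)) (measurableSet_singleton (i+1)))).union
          ((hIn (measurableSet_singleton (i+1))).inter
            ((hIadapted (n+1)) (measurableSet_singleton i)))
      exact ((ih i).mono (ℱ.mono n.le_succ) le_rfl).add
        (Measurable.ite hs measurable_const measurable_const)
  -- upper bound for the edge counts
  have hXle : ∀ n (i : ZMod 4) ω, X n i ω ≤ x0 i + n := by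
    intro n
    induction n with
    | zero => intro i ω; rw [hX0]; omega
    | succ n ih =>
      intro i ω
      rw [hXrec]
      have := ih i ω
      have h1 : (if (I n ω = i ∧ I (n + 1) ω = i + 1) ∨ (I n ω = i + 1 ∧ I (n + 1) ω = i)
          then 1 else 0) ≤ 1 := by split <;> omega
      omega
  have hXlt : ∀ n (i : ZMod 4) ω, X n i ω < (∑ j : ZMod 4, x0 j) + n + 1 := by
    intro n i ω
    have h1 := hXle n i ω
    have h2 : x0 i ≤ ∑ j : ZMod 4, x0 j :=
      Finset.single_le_sum (fun j _ => Nat.zero_le (x0 j)) (Finset.mem_univ i)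
    omega
  -- measurability / adaptedness of the process
  have hκm : ∀ n, Measurable[ℱ n] (fun ω => ∑ i ∈ Finset.range 4,
      (-1 : ℝ) ^ i * ∑ k ∈ Finset.range (X n (i : ZMod 4) ω), 1 / W k) := by
    intro n
    refine Finset.measurable_sum _ (fun i _ => ?_)
    exact ((measurable_from_top (f := fun m => ∑ k ∈ Finset.range m, 1 / W k)).comp
      (hXm n (i : ZMod 4))).const_mul ((-1:ℝ)^i)
  have hadp : StronglyAdapted ℱ (fun n ω => ∑ i ∈ Finset.range 4,
      (-1 : ℝ) ^ i * ∑ k ∈ Finset.range (X n (i : ZMod 4) ω), 1 / W k) :=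
    fun n => (hκm n).stronglyMeasurable
  -- integrability
  have hsumnn : ∀ m : ℕ, (0:ℝ) ≤ ∑ k ∈ Finset.range m, 1 / W k :=
    fun m => Finset.sum_nonneg fun k _ => (one_div_pos.2 (hW k)).le
  have hWstar_mono : ∀ {a b : ℕ}, a ≤ b →
      (∑ k ∈ Finset.range a, 1 / W k) ≤ ∑ k ∈ Finset.range b, 1 / W k := by
    intro a b hab
    exact Finset.sum_le_sum_of_subset_of_nonneg (Finset.range_subset_range.2 hab)
      (fun k _ _ => (one_div_pos.2 (hW k)).le)
  have hint : ∀ n, Integrable (fun ω => ∑ i ∈ Finset.range 4,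
      (-1 : ℝ) ^ i * ∑ k ∈ Finset.range (X n (i : ZMod 4) ω), 1 / W k) μ := by
    intro n
    refine integrable_of_bdd ((hκm n).mono (ℱ.le n) le_rfl)
      (C := ∑ i ∈ Finset.range 4, ∑ k ∈ Finset.range ((∑ j : ZMod 4, x0 j) + n + 1), 1 / W k) ?_
    intro ω
    refine (Finset.abs_sum_le_sum_abs _ _).trans (Finset.sum_le_sum fun i _ => ?_)
    rw [abs_mul, abs_pow, abs_neg, abs_one, one_pow, one_mul, abs_of_nonneg (hsumnn _)]
    exact hWstar_mono (le_of_lt (hXlt n (i : ZMod 4) ω))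
  refine martingale_nat hadp hint fun n => ?_
  -- the compensator terms
  set D : ℕ → Ω → ℝ := fun j ω => (if I n ω = (j:ZMod 4) then (1:ℝ) else 0) *
      (((-1:ℝ)^((j:ZMod 4)).val / W (X n (j:ZMod 4) ω)
          - (-1:ℝ)^(((j:ZMod 4)) - 1).val / W (X n ((j:ZMod 4) - 1) ω)) *
        (if I (n+1) ω = (j:ZMod 4) + 1 then (1:ℝ) else 0)
       + (-1:ℝ)^(((j:ZMod 4)) - 1).val / W (X n ((j:ZMod 4) - 1) ω)) with hD_def
  have hDfact : ∀ j : ℕ, Integrable (D j) μ ∧ μ[D j | ℱ n] =ᵐ[μ] 0 := by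
    intro j
    rw [hD_def]
    exact stepLemma μ ℱ W hW I X n (hIadapted n)
      ((hIadapted (n+1)).mono (ℱ.le (n+1)) le_rfl) (hXm n)
      ((∑ j : ZMod 4, x0 j) + n + 1) (fun i ω => hXlt n i ω) ((j:ZMod 4)) (htrans n (j:ZMod 4))
  have claim1 : (fun ω => ∑ i ∈ Finset.range 4,
        (-1 : ℝ) ^ i * ∑ k ∈ Finset.range (X (n+1) (i : ZMod 4) ω), 1 / W k)
      = (fun ω => ∑ i ∈ Finset.range 4,
          (-1 : ℝ) ^ i * ∑ k ∈ Finset.range (X n (i : ZMod 4) ω), 1 / W k)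
        + ∑ j ∈ Finset.range 4, D j := by
    funext ω
    simp only [Pi.add_apply, Finset.sum_apply, hD_def]
    rcases zmod4_cases (I n ω) with h0|h0|h0|h0 <;>
      rcases hstep n ω with h1|h1 <;>
      rw [h0] at h1 <;>
      simp (config := { decide := true }) only [Finset.sum_range_succ, Finset.sum_range_zero,
        hXrec, h0, h1, Nat.cast_ofNat, Nat.cast_one, Nat.cast_zero,
        show (0:ZMod 4) - 1 = 3 from by decide, show (1:ZMod 4) - 1 = 0 from by decide,
        show (2:ZMod 4) - 1 = 1 from by decide, show (3:ZMod 4) - 1 = 2 from by decide,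
        show (0:ZMod 4) + 1 = 1 from by decide, show (1:ZMod 4) + 1 = 2 from by decide,
        show (2:ZMod 4) + 1 = 3 from by decide, show (3:ZMod 4) + 1 = 0 from by decide,
        show (0:ZMod 4).val = 0 from rfl, show (1:ZMod 4).val = 1 from rfl,
        show (2:ZMod 4).val = 2 from rfl, show (3:ZMod 4).val = 3 from rfl,
        if_true, if_false] <;>
      norm_num <;> ring
  rw [claim1]
  have hDsum_int : Integrable (∑ j ∈ Finset.range 4, D j) μ :=
    integrable_finset_sum' _ (fun j _ => (hDfact j).1)
  have h1 : μ[(fun ω => ∑ i ∈ Finset.range 4,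
        (-1 : ℝ) ^ i * ∑ k ∈ Finset.range (X n (i : ZMod 4) ω), 1 / W k)
        + ∑ j ∈ Finset.range 4, D j | ℱ n]
      =ᵐ[μ] μ[(fun ω => ∑ i ∈ Finset.range 4,
        (-1 : ℝ) ^ i * ∑ k ∈ Finset.range (X n (i : ZMod 4) ω), 1 / W k) | ℱ n]
        + μ[∑ j ∈ Finset.range 4, D j | ℱ n] := condExp_add (hint n) hDsum_int _
  have h2 : μ[(fun ω => ∑ i ∈ Finset.range 4,
        (-1 : ℝ) ^ i * ∑ k ∈ Finset.range (X n (i : ZMod 4) ω), 1 / W k) | ℱ n]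
      = fun ω => ∑ i ∈ Finset.range 4,
        (-1 : ℝ) ^ i * ∑ k ∈ Finset.range (X n (i : ZMod 4) ω), 1 / W k :=
    condExp_of_stronglyMeasurable (ℱ.le n) (hκm n).stronglyMeasurable (hint n)
  have h3 : μ[∑ j ∈ Finset.range 4, D j | ℱ n]
      =ᵐ[μ] ∑ j ∈ Finset.range 4, μ[D j | ℱ n] :=
    condExp_finsetSum (fun j _ => (hDfact j).1) _
  have h4 : ∀ᵐ ω ∂μ, ∀ j : ℕ, j < 4 → (μ[D j | ℱ n]) ω = 0 := by
    rw [MeasureTheory.ae_all_iff]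
    intro j
    filter_upwards [(hDfact j).2] with ω hω
    intro _
    simpa using hω
  refine EventuallyEq.symm ?_
  refine h1.trans ?_
  rw [h2]
  filter_upwards [h3, h4] with ω hω3 hω4
  simp only [Pi.add_apply]
  rw [hω3]
  have : (∑ j ∈ Finset.range 4, μ[D j | ℱ n]) ω = 0 := by
    rw [Finset.sum_apply]
    exact Finset.sum_eq_zero fun j hj => hω4 j (Finset.mem_range.1 hj)
  rw [this, add_zero]
end
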